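/- Let N = 1 and write W = W₁. For every Schwartz function ψ ∈ 𝒮(ℝ, ℂ): 𝒬₁(e^{2πix})(Wψ) = W(Aψ) where (Aψ)(t) = e^{2πit}(1 − 2πit)ψ(t), and 𝒬₁(e^{−2πix})(Wψ) = W(A†ψ) where (A†ψ)(t) = e^{−2πit}(1 + 2πit)ψ(t). -/

import Mathlib

noncomputable section

/-- Partial derivative in the first variable. -/
def pdx (φ : ℝ × ℝ → ℂ) (p : ℝ × ℝ) : ℂ := fderiv ℝ φ p (1, 0)

/-- Partial derivative in the second variable. -/
def pdy (φ : ℝ × ℝ → ℂ) (p : ℝ × ℝ) : ℂ := fderiv ℝ φ p (0, 1)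

/-- The prequantization map `𝒬_N` of the torus, acting on functions on `ℝ²`. -/
def Q (N : ℤ) (f : ℝ × ℝ → ℂ) (φ : ℝ × ℝ → ℂ) : ℝ × ℝ → ℂ := fun p =>
  (1 / (2 * (Real.pi : ℂ) * Complex.I * (N : ℂ))) *
      (pdx f p * (pdy φ p - 2 * (Real.pi : ℂ) * Complex.I * (N : ℂ) * (p.1 : ℂ) * φ p) -
        pdy f p * pdx φ p) +
    f p * φ p

/-- The Weil–Brezin–Zak transform `(W_N ψ)(x,y) = Σ_{k∈ℤ} ψ(x+k) e^{−2πiNky}`. -/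
def WBZ (N : ℤ) (ψ : ℝ → ℂ) : ℝ × ℝ → ℂ := fun p =>
  ∑' k : ℤ, ψ (p.1 + k) * Complex.exp (-(2 * (Real.pi : ℂ) * Complex.I * (N : ℂ) * (k : ℂ) * (p.2 : ℂ)))

namespace WBZaux

/-- The constant `2πi`. -/
def cc : ℂ := 2 * (Real.pi : ℂ) * Complex.I

lemma cc_ne : cc ≠ 0 := by
  simp [cc, Complex.ext_iff, Real.pi_ne_zero]

/-- The exponential factor in the Weil–Brezin–Zak transform with `N = 1`. -/
def eterm (k : ℤ) (y : ℝ) : ℂ := Complex.exp (-(cc * k * y))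

lemma norm_eterm (k : ℤ) (y : ℝ) : ‖eterm k y‖ = 1 := by
  have h : -(cc * (k : ℂ) * (y : ℂ)) = ((-(2 * Real.pi * k * y) : ℝ) : ℂ) * Complex.I := by
    push_cast [cc]; ring
  rw [eterm, h, Complex.norm_exp_ofReal_mul_I]

lemma wbz_one_eq (f : ℝ → ℂ) :
    WBZ 1 f = fun p : ℝ × ℝ => ∑' k : ℤ, f (p.1 + k) * eterm k p.2 := by
  funext p
  refine tsum_congr fun k => ?_
  simp only [WBZ, eterm, cc, Int.cast_one, mul_one]

/-- Fundamental decay bound. -/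
lemma schwartz_bound (φ : SchwartzMap ℝ ℂ) (x₀ : ℝ) :
    ∃ C : ℝ, 0 ≤ C ∧ ∀ (k : ℤ) (x : ℝ), |x - x₀| ≤ 1 →
      (1 + |(k : ℝ)|) * ‖φ (x + k)‖ ≤ C * (1 / (1 + |(k : ℝ)|) ^ 2) := by
  obtain ⟨D, hD0, hD⟩ : ∃ D : ℝ, 0 ≤ D ∧ ∀ t : ℝ, (1 + |t|) ^ 3 * ‖φ t‖ ≤ D := by
    refine ⟨2 ^ 3 * (Finset.Iic ((3 : ℕ), (0 : ℕ))).sup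
      (fun m => SchwartzMap.seminorm ℝ m.1 m.2) φ, by positivity, fun t => ?_⟩
    have := SchwartzMap.one_add_le_sup_seminorm_apply (𝕜 := ℝ) (m := (3, 0))
      (le_refl 3) (le_refl 0) φ t
    simpa [Real.norm_eq_abs] using this
  set a : ℝ := |x₀| + 2 with ha
  refine ⟨a ^ 3 * D, by positivity, ?_⟩
  intro k x hx
  have hk1 : (0 : ℝ) < 1 + |(k : ℝ)| := by positivity
  have key : 1 + |(k : ℝ)| ≤ a * (1 + |x + k|) := by
    have h1 : |(k : ℝ)| ≤ |x + k| + |x| := by simpa using abs_sub (x + k) x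
    have h2 : |x| ≤ |x - x₀| + |x₀| := by simpa using abs_add_le (x - x₀) x₀
    nlinarith [abs_nonneg (x + (k : ℝ)), abs_nonneg x₀]
  rw [mul_one_div, le_div_iff₀ (by positivity)]
  calc (1 + |(k : ℝ)|) * ‖φ (x + k)‖ * (1 + |(k : ℝ)|) ^ 2
      = (1 + |(k : ℝ)|) ^ 3 * ‖φ (x + k)‖ := by ring
    _ ≤ (a * (1 + |x + k|)) ^ 3 * ‖φ (x + k)‖ :=
        mul_le_mul_of_nonneg_right (pow_le_pow_left₀ hk1.le key 3) (norm_nonneg _)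
    _ = a ^ 3 * ((1 + |x + k|) ^ 3 * ‖φ (x + k)‖) := by ring
    _ ≤ a ^ 3 * D := mul_le_mul_of_nonneg_left (hD _) (by positivity)

lemma sum_base : Summable (fun k : ℤ => 1 / (1 + |(k : ℝ)|) ^ 2) := by
  have hnat : Summable (fun n : ℕ => 1 / ((n : ℝ) + 1) ^ 2) := by
    have := (summable_nat_add_iff (f := fun n : ℕ => 1 / (n : ℝ) ^ 2) 1).2
      (Real.summable_one_div_nat_pow.2 one_lt_two)
    simpa using this
  apply Summable.of_nat_of_neg
  · exact hnat.congr fun n => by rw [Int.cast_natCast, Nat.abs_cast, add_comm]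
  · exact hnat.congr fun n => by
      rw [Int.cast_neg, abs_neg, Int.cast_natCast, Nat.abs_cast, add_comm]

/-- The derivative of the `k`-th term of the Weil–Brezin–Zak series. -/
def Lder (ψ : SchwartzMap ℝ ℂ) (k : ℤ) (p : ℝ × ℝ) : ℝ × ℝ →L[ℝ] ℂ :=
  (ContinuousLinearMap.fst ℝ ℝ ℝ).smulRight (deriv (⇑ψ) (p.1 + k) * eterm k p.2) +
  (ContinuousLinearMap.snd ℝ ℝ ℝ).smulRight (-(cc * k) * ψ (p.1 + k) * eterm k p.2)

lemma hasFDerivAt_term (ψ : SchwartzMap ℝ ℂ) (k : ℤ) (p : ℝ × ℝ) :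
    HasFDerivAt (fun q : ℝ × ℝ => ψ (q.1 + k) * eterm k q.2) (Lder ψ k p) p := by
  have h1 : HasFDerivAt (fun q : ℝ × ℝ => (ψ (q.1 + k) : ℂ))
      ((ContinuousLinearMap.smulRight (1 : ℝ →L[ℝ] ℝ) (deriv (⇑ψ) (p.1 + k))).comp
        (ContinuousLinearMap.fst ℝ ℝ ℝ)) p := by
    have hin : HasFDerivAt (fun q : ℝ × ℝ => q.1 + (k : ℝ)) (ContinuousLinearMap.fst ℝ ℝ ℝ) p :=
      (hasFDerivAt_fst).add_const _
    have h2 : HasFDerivAt (⇑ψ) (ContinuousLinearMap.smulRight (1 : ℝ →L[ℝ] ℝ)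
        (deriv (⇑ψ) (p.1 + k))) (p.1 + k) :=
      hasDerivAt_iff_hasFDerivAt.1 (ψ.differentiable.differentiableAt).hasDerivAt
    exact h2.comp p hin
  have hlin : HasFDerivAt (fun q : ℝ × ℝ => -(cc * k * (q.2 : ℂ)))
      ((ContinuousLinearMap.snd ℝ ℝ ℝ).smulRight (-(cc * k))) p := by
    have := ((ContinuousLinearMap.snd ℝ ℝ ℝ).smulRight (-(cc * (k : ℂ)))).hasFDerivAt (x := p)
    convert this using 1
    funext q
    simp [Complex.real_smul]
    ring
  have h2 : HasFDerivAt (fun q : ℝ × ℝ => eterm k q.2)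
      ((eterm k p.2) • ((ContinuousLinearMap.snd ℝ ℝ ℝ).smulRight (-(cc * k)))) p := by
    have hexp : HasDerivAt Complex.exp (eterm k p.2) (-(cc * k * (p.2 : ℂ))) := by
      simpa [eterm] using Complex.hasDerivAt_exp (-(cc * k * (p.2 : ℂ)))
    exact HasDerivAt.comp_hasFDerivAt_of_eq p hexp hlin rfl
  have := h1.mul h2
  refine this.congr_fderiv ?_
  ext
  · simp [Lder, eterm, ContinuousLinearMap.smulRight_apply, Complex.real_smul, smul_eq_mul]
    ring
  · simp [Lder, eterm, ContinuousLinearMap.smulRight_apply, Complex.real_smul, smul_eq_mul]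
    ring

lemma Lder_bound (ψ : SchwartzMap ℝ ℂ) (p₀ : ℝ × ℝ) :
    ∃ u : ℤ → ℝ, Summable u ∧ ∀ (k : ℤ) (q : ℝ × ℝ), q ∈ Metric.ball p₀ 1 →
      ‖Lder ψ k q‖ ≤ u k := by
  obtain ⟨C₁, hC₁0, hC₁⟩ := schwartz_bound (SchwartzMap.derivCLM ℝ ℂ ψ) p₀.1
  obtain ⟨C₂, hC₂0, hC₂⟩ := schwartz_bound ψ p₀.1
  refine ⟨fun k => (C₁ + 2 * Real.pi * C₂) * (1 / (1 + |(k : ℝ)|) ^ 2),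
    sum_base.mul_left _, ?_⟩
  intro k q hq
  have hq1 : |q.1 - p₀.1| ≤ 1 := by
    have h := Metric.mem_ball.1 hq
    have : dist q.1 p₀.1 ≤ dist q p₀ := le_max_left _ _
    rw [Real.dist_eq] at this
    linarith
  have hk1 : (0 : ℝ) < 1 + |(k : ℝ)| := by positivity
  have hd : ‖deriv (⇑ψ) (q.1 + k)‖ ≤ C₁ * (1 / (1 + |(k : ℝ)|) ^ 2) := by
    have h := hC₁ k q.1 hq1
    rw [SchwartzMap.derivCLM_apply] at h
    nlinarith [norm_nonneg (deriv (⇑ψ) (q.1 + k)), abs_nonneg ((k : ℝ))]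
  have hv : ‖cc * k‖ * ‖ψ (q.1 + k)‖ ≤ 2 * Real.pi * (C₂ * (1 / (1 + |(k : ℝ)|) ^ 2)) := by
    have hcck : ‖cc * (k : ℂ)‖ = 2 * Real.pi * |(k : ℝ)| := by
      simp [cc, norm_mul, Complex.norm_real, Real.norm_eq_abs,
        abs_of_nonneg Real.pi_nonneg, Complex.norm_intCast]
    have h := hC₂ k q.1 hq1
    have hk' : |(k : ℝ)| * ‖ψ (q.1 + k)‖ ≤ (1 + |(k : ℝ)|) * ‖ψ (q.1 + k)‖ := by
      nlinarith [norm_nonneg (ψ (q.1 + k))]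
    rw [hcck]
    nlinarith [norm_nonneg (ψ (q.1 + k)), Real.pi_pos]
  calc ‖Lder ψ k q‖
      ≤ ‖(ContinuousLinearMap.fst ℝ ℝ ℝ).smulRight (deriv (⇑ψ) (q.1 + k) * eterm k q.2)‖ +
        ‖(ContinuousLinearMap.snd ℝ ℝ ℝ).smulRight (-(cc * k) * ψ (q.1 + k) * eterm k q.2)‖ :=
        norm_add_le _ _
    _ ≤ ‖deriv (⇑ψ) (q.1 + k) * eterm k q.2‖ + ‖-(cc * k) * ψ (q.1 + k) * eterm k q.2‖ := by
        gcongr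
        · calc ‖(ContinuousLinearMap.fst ℝ ℝ ℝ).smulRight (deriv (⇑ψ) (q.1 + k) * eterm k q.2)‖
              ≤ ‖(ContinuousLinearMap.fst ℝ ℝ ℝ)‖ * ‖deriv (⇑ψ) (q.1 + k) * eterm k q.2‖ :=
              le_of_eq (ContinuousLinearMap.norm_smulRight_apply _ _)
            _ ≤ 1 * ‖deriv (⇑ψ) (q.1 + k) * eterm k q.2‖ := by
              gcongr; exact ContinuousLinearMap.norm_fst_le ℝ ℝ ℝ
            _ = _ := one_mul _
        · calc ‖(ContinuousLinearMap.snd ℝ ℝ ℝ).smulRight (-(cc * k) * ψ (q.1 + k) * eterm k q.2)‖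
              ≤ ‖(ContinuousLinearMap.snd ℝ ℝ ℝ)‖ * ‖-(cc * k) * ψ (q.1 + k) * eterm k q.2‖ :=
              le_of_eq (ContinuousLinearMap.norm_smulRight_apply _ _)
            _ ≤ 1 * ‖-(cc * k) * ψ (q.1 + k) * eterm k q.2‖ := by
              gcongr; exact ContinuousLinearMap.norm_snd_le ℝ ℝ ℝ
            _ = _ := one_mul _
    _ = ‖deriv (⇑ψ) (q.1 + k)‖ + ‖cc * k‖ * ‖ψ (q.1 + k)‖ := by
        simp only [norm_mul, norm_neg, norm_eterm, mul_one]
    _ ≤ C₁ * (1 / (1 + |(k : ℝ)|) ^ 2) + 2 * Real.pi * (C₂ * (1 / (1 + |(k : ℝ)|) ^ 2)) :=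
        add_le_add hd hv
    _ = (C₁ + 2 * Real.pi * C₂) * (1 / (1 + |(k : ℝ)|) ^ 2) := by ring

lemma summable_term (ψ : SchwartzMap ℝ ℂ) (p : ℝ × ℝ) :
    Summable (fun k : ℤ => ψ (p.1 + k) * eterm k p.2) := by
  obtain ⟨C, hC0, hC⟩ := schwartz_bound ψ p.1
  apply Summable.of_norm_bounded (sum_base.mul_left C)
  intro k
  rw [norm_mul, norm_eterm, mul_one]
  have h := hC k p.1 (by simp)
  nlinarith [norm_nonneg (ψ (p.1 + k)), abs_nonneg ((k : ℝ))]

lemma summable_Lder (ψ : SchwartzMap ℝ ℂ) (p : ℝ × ℝ) :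
    Summable (fun k : ℤ => Lder ψ k p) := by
  obtain ⟨u, hu, hb⟩ := Lder_bound ψ p
  exact Summable.of_norm_bounded hu fun k => hb k p (Metric.mem_ball_self one_pos)

lemma hasFDerivAt_wbz (ψ : SchwartzMap ℝ ℂ) (p : ℝ × ℝ) :
    HasFDerivAt (WBZ 1 ⇑ψ) (∑' k : ℤ, Lder ψ k p) p := by
  rw [wbz_one_eq]
  obtain ⟨u, hu, hb⟩ := Lder_bound ψ p
  exact hasFDerivAt_tsum_of_isPreconnected hu Metric.isOpen_ball
    (convex_ball p 1).isPreconnected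
    (fun k q _ => hasFDerivAt_term ψ k q) hb (Metric.mem_ball_self one_pos)
    (summable_term ψ p) (Metric.mem_ball_self one_pos)

lemma pdy_wbz (ψ : SchwartzMap ℝ ℂ) (p : ℝ × ℝ) :
    pdy (WBZ 1 ⇑ψ) p = ∑' k : ℤ, -(cc * k) * ψ (p.1 + k) * eterm k p.2 := by
  have h := hasFDerivAt_wbz ψ p
  rw [pdy, h.fderiv]
  rw [show (∑' k : ℤ, Lder ψ k p) ((0 : ℝ), (1 : ℝ)) =
      (ContinuousLinearMap.apply ℝ ℂ ((0 : ℝ), (1 : ℝ))) (∑' k : ℤ, Lder ψ k p) from rfl,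
    (ContinuousLinearMap.apply ℝ ℂ ((0 : ℝ), (1 : ℝ))).map_tsum (summable_Lder ψ p)]
  refine tsum_congr fun k => ?_
  simp [Lder, ContinuousLinearMap.smulRight_apply]

lemma hasFDerivAt_expx (w : ℂ) (p : ℝ × ℝ) :
    HasFDerivAt (fun q : ℝ × ℝ => Complex.exp (w * q.1))
      ((ContinuousLinearMap.fst ℝ ℝ ℝ).smulRight (w * Complex.exp (w * p.1))) p := by
  have hlin : HasFDerivAt (fun q : ℝ × ℝ => w * (q.1 : ℂ))
      ((ContinuousLinearMap.fst ℝ ℝ ℝ).smulRight w) p := by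
    have := ((ContinuousLinearMap.fst ℝ ℝ ℝ).smulRight w).hasFDerivAt (x := p)
    convert this using 1
    funext q
    simp [Complex.real_smul]
    ring
  have hexp : HasDerivAt Complex.exp (Complex.exp (w * (p.1 : ℂ))) (w * (p.1 : ℂ)) :=
    Complex.hasDerivAt_exp _
  have := HasDerivAt.comp_hasFDerivAt_of_eq p hexp hlin rfl
  refine this.congr_fderiv ?_
  ext <;> simp [ContinuousLinearMap.smulRight_apply, smul_eq_mul] <;> ring

lemma pdx_expx (w : ℂ) (p : ℝ × ℝ) :
    pdx (fun q : ℝ × ℝ => Complex.exp (w * q.1)) p = w * Complex.exp (w * p.1) := by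
  rw [pdx, (hasFDerivAt_expx w p).fderiv]
  simp [ContinuousLinearMap.smulRight_apply]

lemma pdy_expx (w : ℂ) (p : ℝ × ℝ) :
    pdy (fun q : ℝ × ℝ => Complex.exp (w * q.1)) p = 0 := by
  rw [pdy, (hasFDerivAt_expx w p).fderiv]
  simp [ContinuousLinearMap.smulRight_apply]

lemma exp_int_cc (m : ℤ) : Complex.exp ((m : ℂ) * cc) = 1 := by
  have : (m : ℂ) * cc = (m : ℂ) * (2 * Real.pi * Complex.I) := by rw [cc]
  rw [this]
  exact Complex.exp_int_mul_two_pi_mul_I m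

/-- The main computation, for `f q = exp (σ cc q.1)` with `σ` an integer (`= ±1`). -/
lemma main_core (ψ : SchwartzMap ℝ ℂ) (σ : ℤ) :
    Q 1 (fun q : ℝ × ℝ => Complex.exp ((σ : ℂ) * cc * q.1)) (WBZ 1 ⇑ψ) =
      WBZ 1 (fun t : ℝ => Complex.exp ((σ : ℂ) * cc * t) * (1 - (σ : ℂ) * cc * t) * ψ t) := by
  funext p
  set x : ℝ := p.1
  set T1 : ℂ := ∑' k : ℤ, ψ (x + k) * eterm k p.2 with hT1
  set T2 : ℂ := ∑' k : ℤ, -(cc * k) * ψ (x + k) * eterm k p.2 with hT2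
  have hs1 : Summable (fun k : ℤ => ψ (x + k) * eterm k p.2) := summable_term ψ p
  have hs2 : Summable (fun k : ℤ => -(cc * k) * ψ (x + k) * eterm k p.2) := by
    have h := (summable_Lder ψ p).norm
    obtain ⟨u, hu, hb⟩ := Lder_bound ψ p
    apply Summable.of_norm_bounded hu
    intro k
    have h1 : -(cc * k) * ψ (x + k) * eterm k p.2 = Lder ψ k p (0, 1) := by
      simp [Lder, ContinuousLinearMap.smulRight_apply]
      exact Or.inl (Or.inl rfl)
    rw [h1]
    calc ‖Lder ψ k p (0, 1)‖ ≤ ‖Lder ψ k p‖ * ‖((0 : ℝ), (1 : ℝ))‖ :=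
          ContinuousLinearMap.le_opNorm _ _
      _ ≤ u k * 1 := by
          apply mul_le_mul (hb k p (Metric.mem_ball_self one_pos)) _ (norm_nonneg _)
            ((norm_nonneg _).trans (hb k p (Metric.mem_ball_self one_pos)))
          simp [Prod.norm_def]
      _ = u k := mul_one _
  -- left-hand side pieces
  have hW : WBZ 1 ⇑ψ p = T1 := by rw [wbz_one_eq]
  have hpdy : pdy (WBZ 1 ⇑ψ) p = T2 := pdy_wbz ψ p
  have hpdx : pdx (fun q : ℝ × ℝ => Complex.exp ((σ : ℂ) * cc * q.1)) p =
      (σ : ℂ) * cc * Complex.exp ((σ : ℂ) * cc * x) := pdx_expx _ p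
  have hpdyf : pdy (fun q : ℝ × ℝ => Complex.exp ((σ : ℂ) * cc * q.1)) p = 0 := pdy_expx _ p
  -- right-hand side
  have hterm : ∀ k : ℤ,
      Complex.exp ((σ : ℂ) * cc * ((x + (k : ℝ) : ℝ) : ℂ)) *
          (1 - (σ : ℂ) * cc * ((x + (k : ℝ) : ℝ) : ℂ)) * ψ (x + k) * eterm k p.2 =
        Complex.exp ((σ : ℂ) * cc * x) *
          ((σ : ℂ) * (-(cc * k) * ψ (x + k) * eterm k p.2) +
            (1 - (σ : ℂ) * cc * x) * (ψ (x + k) * eterm k p.2)) := by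
    intro k
    have hsplit : Complex.exp ((σ : ℂ) * cc * ((x + (k : ℝ) : ℝ) : ℂ)) =
        Complex.exp ((σ : ℂ) * cc * x) * Complex.exp (((σ * k : ℤ) : ℂ) * cc) := by
      rw [← Complex.exp_add]
      congr 1
      push_cast
      ring
    rw [hsplit, exp_int_cc, mul_one]
    push_cast
    ring
  have hR : WBZ 1 (fun t : ℝ => Complex.exp ((σ : ℂ) * cc * t) * (1 - (σ : ℂ) * cc * t) * ψ t) p
      = Complex.exp ((σ : ℂ) * cc * x) *
        ((σ : ℂ) * T2 + (1 - (σ : ℂ) * cc * x) * T1) := by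
    rw [wbz_one_eq]
    beta_reduce
    rw [tsum_congr hterm, tsum_mul_left]
    congr 1
    rw [hT1, hT2, Summable.tsum_add ((hs2.mul_left _)) ((hs1.mul_left _)), tsum_mul_left, tsum_mul_left]
  rw [hR]
  simp only [Q, Int.cast_one, mul_one]
  rw [hpdy, hpdx, hpdyf, hW]
  rw [show (2 : ℂ) * (Real.pi : ℂ) * Complex.I = cc from rfl]
  field_simp [cc_ne]
  ring

end WBZaux

open WBZaux in
/-- Under the Weil–Brezin–Zak transform (with `N = 1`), `𝒬₁(e^{±2πix})` go over to
the operators `A` and `A†` on `L²(ℝ, ℂ)`: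
`(Aψ)(t) = e^{2πit}(1 − 2πit)ψ(t)`, `(A†ψ)(t) = e^{−2πit}(1 + 2πit)ψ(t)`. -/
theorem wbz_intertwines_A (ψ : SchwartzMap ℝ ℂ) :
    Q 1 (fun q => Complex.exp (2 * (Real.pi : ℂ) * Complex.I * (q.1 : ℂ))) (WBZ 1 ⇑ψ) =
        WBZ 1 (fun t : ℝ =>
          Complex.exp (2 * (Real.pi : ℂ) * Complex.I * (t : ℂ)) *
            (1 - 2 * (Real.pi : ℂ) * Complex.I * (t : ℂ)) * ψ t) ∧
    Q 1 (fun q => Complex.exp (-(2 * (Real.pi : ℂ) * Complex.I * (q.1 : ℂ)))) (WBZ 1 ⇑ψ) =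
        WBZ 1 (fun t : ℝ =>
          Complex.exp (-(2 * (Real.pi : ℂ) * Complex.I * (t : ℂ))) *
            (1 + 2 * (Real.pi : ℂ) * Complex.I * (t : ℂ)) * ψ t) := by
  constructor
  · have e1 : (fun q : ℝ × ℝ => Complex.exp (2 * (Real.pi : ℂ) * Complex.I * (q.1 : ℂ))) =
        (fun q : ℝ × ℝ => Complex.exp (((1 : ℤ) : ℂ) * cc * q.1)) := by
      funext q; rw [show (2 : ℂ) * (Real.pi : ℂ) * Complex.I * (q.1 : ℂ) =
        ((1 : ℤ) : ℂ) * cc * q.1 by push_cast [cc]; ring]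
    have e2 : (fun t : ℝ => Complex.exp (2 * (Real.pi : ℂ) * Complex.I * (t : ℂ)) *
          (1 - 2 * (Real.pi : ℂ) * Complex.I * (t : ℂ)) * ψ t) =
        (fun t : ℝ => Complex.exp (((1 : ℤ) : ℂ) * cc * t) * (1 - ((1 : ℤ) : ℂ) * cc * t) * ψ t) := by
      funext t
      rw [show (2 : ℂ) * (Real.pi : ℂ) * Complex.I * (t : ℂ) =
        ((1 : ℤ) : ℂ) * cc * t by push_cast [cc]; ring]
    rw [e1, e2]
    exact main_core ψ 1
  · have e1 : (fun q : ℝ × ℝ => Complex.exp (-(2 * (Real.pi : ℂ) * Complex.I * (q.1 : ℂ)))) =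
        (fun q : ℝ × ℝ => Complex.exp (((-1 : ℤ) : ℂ) * cc * q.1)) := by
      funext q; rw [show -(2 * (Real.pi : ℂ) * Complex.I * (q.1 : ℂ)) =
        ((-1 : ℤ) : ℂ) * cc * q.1 by push_cast [cc]; ring]
    have e2 : (fun t : ℝ => Complex.exp (-(2 * (Real.pi : ℂ) * Complex.I * (t : ℂ))) *
          (1 + 2 * (Real.pi : ℂ) * Complex.I * (t : ℂ)) * ψ t) =
        (fun t : ℝ => Complex.exp (((-1 : ℤ) : ℂ) * cc * t) * (1 - ((-1 : ℤ) : ℂ) * cc * t) * ψ t) := by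
      funext t
      rw [show -(2 * (Real.pi : ℂ) * Complex.I * (t : ℂ)) =
        ((-1 : ℤ) : ℂ) * cc * t by push_cast [cc]; ring,
        show (1 : ℂ) + 2 * (Real.pi : ℂ) * Complex.I * (t : ℂ) =
        1 - ((-1 : ℤ) : ℂ) * cc * t by push_cast [cc]; ring]
    rw [e1, e2]
    exact main_core ψ (-1)
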